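/- Let n ≥ 1 and let H : ℝⁿ → ℝ be continuously differentiable and satisfy (H3): there exist γ, δ > 0 such that ∇H(p)·p − γ H(p) ≥ δ for all p ∈ ℝⁿ. Then for every p ∈ ℝⁿ and every t with 0 < t < 1, one has H(t p) ≤ t^{γ} H(p) − (δ/(γ+1)) (1 − t^{γ}). -/

import Mathlib

open scoped RealInnerProductSpace

theorem stmt5 (n : ℕ) (hn : 1 ≤ n)
    (H : EuclideanSpace ℝ (Fin n) → ℝ) (hH : ContDiff ℝ 1 H)
    (γ δ : ℝ) (hγ : 0 < γ) (hδ : 0 < δ)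
    (hH3 : ∀ p, ⟪gradient H p, p⟫ - γ * H p ≥ δ) :
    ∀ p : EuclideanSpace ℝ (Fin n), ∀ t : ℝ, 0 < t → t < 1 →
      H (t • p) ≤ t ^ γ * H p - δ / (γ + 1) * (1 - t ^ γ) := by
  intro p t ht ht1
  -- chain rule: derivative of s ↦ H (s • p)
  have hdiffH : Differentiable ℝ H := hH.differentiable one_ne_zero
  have hderivh : ∀ s : ℝ, HasDerivAt (fun s : ℝ => H (s • p))
      (⟪gradient H (s • p), p⟫) s := by
    intro s
    have h1 : HasDerivAt (fun s : ℝ => s • p) p s := by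
      simpa using (hasDerivAt_id s).smul_const p
    have h2 : HasFDerivAt H (fderiv ℝ H (s • p)) (s • p) :=
      (hdiffH (s • p)).hasFDerivAt
    have := h2.comp_hasDerivAt s h1
    have hg : ⟪gradient H (s • p), p⟫ = fderiv ℝ H (s • p) p := by
      simp [gradient, InnerProductSpace.toDual_symm_apply]
    rw [hg]
    exact this
  set ψ : ℝ → ℝ := fun s => s ^ (-γ) * (H (s • p) + δ / γ) with hψ
  have hψderiv : ∀ s : ℝ, 0 < s → HasDerivAt ψ
      ((-γ) * s ^ (-γ - 1) * (H (s • p) + δ / γ)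
        + s ^ (-γ) * ⟪gradient H (s • p), p⟫) s := by
    intro s hs
    have h1 : HasDerivAt (fun s : ℝ => s ^ (-γ)) ((-γ) * s ^ (-γ - 1)) s := by
      have := Real.hasDerivAt_rpow_const (x := s) (p := -γ) (Or.inl hs.ne')
      simpa using this
    have h2 : HasDerivAt (fun s : ℝ => H (s • p) + δ / γ)
        (⟪gradient H (s • p), p⟫) s := (hderivh s).add_const _
    exact h1.mul h2
  have key : ∀ s : ℝ, 0 < s →
      0 ≤ (-γ) * s ^ (-γ - 1) * (H (s • p) + δ / γ)
        + s ^ (-γ) * ⟪gradient H (s • p), p⟫ := by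
    intro s hs
    have h3 := hH3 (s • p)
    have hinner : ⟪gradient H (s • p), s • p⟫ = s * ⟪gradient H (s • p), p⟫ := by
      rw [real_inner_smul_right]
    rw [hinner] at h3
    have hfac : s ^ (-γ) = s * s ^ (-γ - 1) := by
      rw [← Real.rpow_one_add' hs.le (by simpa using hγ.ne')]
      ring_nf
    have hpow : 0 < s ^ (-γ - 1) := Real.rpow_pos_of_pos hs _
    have : (-γ) * s ^ (-γ - 1) * (H (s • p) + δ / γ)
        + s ^ (-γ) * ⟪gradient H (s • p), p⟫
        = s ^ (-γ - 1) * (s * ⟪gradient H (s • p), p⟫ - γ * H (s • p) - δ) := by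
      rw [hfac]; field_simp; ring
    rw [this]
    have : 0 ≤ s * ⟪gradient H (s • p), p⟫ - γ * H (s • p) - δ := by linarith
    positivity
  -- monotone on [t,1]
  have hmono : MonotoneOn ψ (Set.Icc t 1) := by
    apply monotoneOn_of_deriv_nonneg (convex_Icc t 1)
    · apply ContinuousOn.mono (s := Set.Icc t 1) ?_ le_rfl
      intro s hs
      exact ((hψderiv s (lt_of_lt_of_le ht hs.1)).continuousAt).continuousWithinAt
    · intro s hs
      rw [interior_Icc] at hs
      exact ((hψderiv s (ht.trans hs.1)).differentiableAt).differentiableWithinAt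
    · intro s hs
      rw [interior_Icc] at hs
      rw [(hψderiv s (ht.trans hs.1)).deriv]
      exact key s (ht.trans hs.1)
  have hle : ψ t ≤ ψ 1 := hmono (Set.mem_Icc.2 ⟨le_rfl, ht1.le⟩)
    (Set.mem_Icc.2 ⟨ht1.le, le_rfl⟩) ht1.le
  have hψ1 : ψ 1 = H p + δ / γ := by simp [hψ]
  have hψt : ψ t = t ^ (-γ) * (H (t • p) + δ / γ) := rfl
  rw [hψ1, hψt] at hle
  have htγ : 0 < t ^ γ := Real.rpow_pos_of_pos ht _
  have hinv : t ^ (-γ) = (t ^ γ)⁻¹ := Real.rpow_neg ht.le γ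
  rw [hinv] at hle
  have h4 : H (t • p) + δ / γ ≤ t ^ γ * (H p + δ / γ) := by
    rw [inv_mul_le_iff₀ htγ] at hle
    linarith [hle]
  have h5 : t ^ γ < 1 := Real.rpow_lt_one ht.le ht1 hγ
  have h6 : δ / (γ + 1) ≤ δ / γ := by
    apply div_le_div_of_nonneg_left hδ.le hγ; linarith
  nlinarith [mul_pos htγ hδ, h6, h5, h4]
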